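/- Let T_ω : [0,1] → [0,1] be piecewise monotone maps with monotonicity partition Z_ω^{(n)} for T_ω^n, and let g_{ω,ε}^{(n)} = g_{ω,0}^{(n)} · 1_{X_{ω,n−1,ε}} be weights vanishing on the hole-avoiding set complement. Suppose Z is a collection of pairwise disjoint intervals refining the monotonicity partition such that var_Z(g_{ω,ε}^{(n)}) ≤ 2‖g_{ω,0}^{(n)}‖_∞ on each Z, and ν is a fully supported probability measure on [0,1]. Then for any f of bounded variation, var(L_{ω,ε}^n f) ≤ 9‖g_{ω,ε}^{(n)}‖_∞ var(f) + (8‖g_{ω,ε}^{(n)}‖_∞ / min_{Z} ν(Z)) ν(|f|), where L_{ω,ε}^n f = Σ_Z 1_{T_ω^n(Z)} ((f g_{ω,ε}^{(n)}) ∘ T_{ω,Z}^{−n}). -/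

import Mathlib

open MeasureTheory Set ENNReal

namespace LYaux

lemma evar_zero {s : Set ℝ} : eVariationOn (fun _ : ℝ => (0:ℝ)) s = 0 :=
  eVariationOn.constant_on (by rintro x ⟨u,_,rfl⟩ y ⟨v,_,rfl⟩; rfl)

lemma evar_add_fun_le (f g : ℝ → ℝ) (s : Set ℝ) :
    eVariationOn (fun x => f x + g x) s ≤ eVariationOn f s + eVariationOn g s := by
  apply iSup_le
  rintro ⟨n, u, hu, us⟩
  calc ∑ i ∈ Finset.range n, edist (f (u (i+1)) + g (u (i+1))) (f (u i) + g (u i))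
      ≤ ∑ i ∈ Finset.range n,
          (edist (f (u (i+1))) (f (u i)) + edist (g (u (i+1))) (g (u i))) :=
        Finset.sum_le_sum fun i _ => edist_add_add_le _ _ _ _
    _ = (∑ i ∈ Finset.range n, edist (f (u (i+1))) (f (u i)))
        + ∑ i ∈ Finset.range n, edist (g (u (i+1))) (g (u i)) := Finset.sum_add_distrib
    _ ≤ _ := add_le_add (eVariationOn.sum_le (f := f) (n := n) hu us) (eVariationOn.sum_le (f := g) (n := n) hu us)

lemma evar_sum_le {ι : Type*} (F : ι → ℝ → ℝ) (t : Finset ι) (s : Set ℝ) :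
    eVariationOn (fun x => ∑ i ∈ t, F i x) s ≤ ∑ i ∈ t, eVariationOn (F i) s := by
  classical
  induction t using Finset.induction with
  | empty => simp only [Finset.sum_empty]; exact le_of_eq evar_zero
  | insert a t ha ih =>
    calc eVariationOn (fun x => ∑ i ∈ insert a t, F i x) s
        = eVariationOn (fun x => F a x + ∑ i ∈ t, F i x) s := by
          apply eVariationOn.eq_of_eqOn; intro x _; simp [Finset.sum_insert ha]
      _ ≤ eVariationOn (F a) s + eVariationOn (fun x => ∑ i ∈ t, F i x) s :=
          evar_add_fun_le _ _ _
      _ ≤ eVariationOn (F a) s + ∑ i ∈ t, eVariationOn (F i) s := add_le_add_right ih _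
      _ = ∑ i ∈ insert a t, eVariationOn (F i) s :=
          (Finset.sum_insert (f := fun i => eVariationOn (F i) s) ha).symm

lemma evar_mul_le (f g : ℝ → ℝ) (s : Set ℝ) (A B : ℝ≥0∞)
    (hA : ∀ x ∈ s, ENNReal.ofReal |f x| ≤ A) (hB : ∀ x ∈ s, ENNReal.ofReal |g x| ≤ B) :
    eVariationOn (fun x => f x * g x) s ≤ A * eVariationOn g s + B * eVariationOn f s := by
  apply iSup_le
  rintro ⟨n, u, hu, us⟩
  have key : ∀ i, edist (f (u (i+1)) * g (u (i+1))) (f (u i) * g (u i))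
      ≤ A * edist (g (u (i+1))) (g (u i)) + B * edist (f (u (i+1))) (f (u i)) := by
    intro i
    have h1 : |f (u (i+1)) * g (u (i+1)) - f (u i) * g (u i)|
        ≤ |f (u (i+1))| * |g (u (i+1)) - g (u i)| + |g (u i)| * |f (u (i+1)) - f (u i)| := by
      have : f (u (i+1)) * g (u (i+1)) - f (u i) * g (u i)
          = f (u (i+1)) * (g (u (i+1)) - g (u i)) + g (u i) * (f (u (i+1)) - f (u i)) := by ring
      rw [this]
      exact (abs_add_le _ _).trans (by rw [abs_mul, abs_mul])
    rw [edist_dist, edist_dist, edist_dist, Real.dist_eq, Real.dist_eq, Real.dist_eq]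
    calc ENNReal.ofReal |f (u (i+1)) * g (u (i+1)) - f (u i) * g (u i)|
        ≤ ENNReal.ofReal (|f (u (i+1))| * |g (u (i+1)) - g (u i)|
            + |g (u i)| * |f (u (i+1)) - f (u i)|) := ENNReal.ofReal_le_ofReal h1
      _ = ENNReal.ofReal |f (u (i+1))| * ENNReal.ofReal |g (u (i+1)) - g (u i)|
          + ENNReal.ofReal |g (u i)| * ENNReal.ofReal |f (u (i+1)) - f (u i)| := by
          rw [ENNReal.ofReal_add (by positivity) (by positivity),
            ENNReal.ofReal_mul (abs_nonneg _), ENNReal.ofReal_mul (abs_nonneg _)]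
      _ ≤ _ := add_le_add (mul_le_mul' (hA _ (us _)) le_rfl) (mul_le_mul' (hB _ (us _)) le_rfl)
  calc ∑ i ∈ Finset.range n, edist (f (u (i+1)) * g (u (i+1))) (f (u i) * g (u i))
      ≤ ∑ i ∈ Finset.range n, (A * edist (g (u (i+1))) (g (u i))
          + B * edist (f (u (i+1))) (f (u i))) := Finset.sum_le_sum fun i _ => key i
    _ = A * ∑ i ∈ Finset.range n, edist (g (u (i+1))) (g (u i))
        + B * ∑ i ∈ Finset.range n, edist (f (u (i+1))) (f (u i)) := by
        rw [Finset.sum_add_distrib, Finset.mul_sum, Finset.mul_sum]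
    _ ≤ _ := add_le_add (mul_le_mul' le_rfl (eVariationOn.sum_le (f := g) (n := n) hu us))
        (mul_le_mul' le_rfl (eVariationOn.sum_le (f := f) (n := n) hu us))

lemma sum_ite_le {s : Finset ℕ} (P : ℕ → Prop) [DecidablePred P]
    (hP : ∀ i j, P i → P j → i = j) (C : ℝ≥0∞) :
    ∑ i ∈ s, (if P i then C else 0) ≤ C := by
  rw [← Finset.sum_filter]
  rcases (s.filter P).eq_empty_or_nonempty with h | ⟨i0, hi0⟩
  · simp [h]
  · have : s.filter P ⊆ {i0} := by
      intro j hj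
      simp only [Finset.mem_filter] at hj hi0
      simp [hP j i0 hj.2 hi0.2]
    calc ∑ _i ∈ s.filter P, C ≤ ∑ _i ∈ ({i0} : Finset ℕ), C :=
          Finset.sum_le_sum_of_subset this
      _ = C := by simp

lemma evar_indicator_le (h : ℝ → ℝ) (J s : Set ℝ) (hJ : J.OrdConnected) (C : ℝ≥0∞)
    (hC : ∀ x ∈ J, ENNReal.ofReal |h x| ≤ C) :
    eVariationOn (J.indicator h) s ≤ eVariationOn h (s ∩ J) + 2 * C := by
  classical
  apply iSup_le
  rintro ⟨n, u, hu, us⟩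
  set F := J.indicator h with hF
  set A : Finset ℕ := (Finset.range (n+1)).filter (fun k => u k ∈ J) with hA
  rcases A.eq_empty_or_nonempty with hAe | hAne
  · -- no points in J: every term vanishes
    have hz : ∀ i ∈ Finset.range n, edist (F (u (i+1))) (F (u i)) = 0 := by
      intro i hi
      simp only [Finset.mem_range] at hi
      have h1 : u i ∉ J := by
        intro hm
        have : i ∈ A := by simp [hA, Finset.mem_filter, Finset.mem_range, hi.trans n.lt_succ_self, hm]
        · simp [hAe] at this
      have h2 : u (i+1) ∉ J := by
        intro hm
        have : i + 1 ∈ A := by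
          simp [hA, Finset.mem_filter, Finset.mem_range, Nat.succ_lt_succ hi, hm]
        simp [hAe] at this
      simp [hF, Set.indicator_of_notMem h1, Set.indicator_of_notMem h2]
    rw [Finset.sum_eq_zero hz]
    exact bot_le
  · set a := A.min' hAne with ha
    set b := A.max' hAne with hb
    have hmemA : ∀ k, k ∈ A ↔ (k ≤ n ∧ u k ∈ J) := by
      intro k; simp [hA, Finset.mem_filter, Finset.mem_range, Nat.lt_succ_iff]
    have haA := A.min'_mem hAne
    have hbA := A.max'_mem hAne
    have hab : a ≤ b := A.min'_le _ hbA
    have hbn : b ≤ n := ((hmemA b).1 hbA).1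
    have huaJ : u a ∈ J := ((hmemA a).1 haA).2
    have hubJ : u b ∈ J := ((hmemA b).1 hbA).2
    have hin : ∀ k, a ≤ k → k ≤ b → u k ∈ J := fun k h1 h2 =>
      hJ.out huaJ hubJ ⟨hu h1, hu h2⟩
    have hout : ∀ k, k ≤ n → u k ∈ J → a ≤ k ∧ k ≤ b := fun k h1 h2 =>
      ⟨A.min'_le _ ((hmemA k).2 ⟨h1, h2⟩), A.le_max' _ ((hmemA k).2 ⟨h1, h2⟩)⟩
    -- split the sum
    have hsub : Finset.Ico a b ⊆ Finset.range n := by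
      intro i hi
      simp only [Finset.mem_Ico] at hi
      exact Finset.mem_range.2 (lt_of_lt_of_le hi.2 hbn)
    rw [← Finset.sum_sdiff hsub]
    -- inner part
    set v : ℕ → ℝ := fun k => u (min (a + k) b) with hv
    have hvmono : Monotone v := fun x y hxy => hu (min_le_min (by omega) le_rfl)
    have hvmem : ∀ k, v k ∈ s ∩ J :=
      fun k => ⟨us _, hin _ (le_min (Nat.le_add_right a k) hab) (min_le_right _ _)⟩
    have hinner : ∑ i ∈ Finset.Ico a b, edist (F (u (i+1))) (F (u i))
        ≤ eVariationOn h (s ∩ J) := by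
      have heq : ∑ i ∈ Finset.Ico a b, edist (F (u (i+1))) (F (u i))
          = ∑ k ∈ Finset.range (b - a), edist (h (v (k+1))) (h (v k)) := by
        rw [Finset.sum_Ico_eq_sum_range]
        apply Finset.sum_congr rfl
        intro k hk
        simp only [Finset.mem_range] at hk
        have h1 : a + k < b := by omega
        have e1 : v k = u (a + k) := by simp only [hv]; congr 1; omega
        have e2 : v (k+1) = u (a + k + 1) := by simp only [hv]; congr 1; omega
        rw [e1, e2, hF, Set.indicator_of_mem (hin _ (by omega) (by omega)),
          Set.indicator_of_mem (hin _ (by omega) (by omega))]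
      rw [heq]
      exact eVariationOn.sum_le (f := h) hvmono hvmem
    -- boundary part
    have houter : ∑ i ∈ Finset.range n \ Finset.Ico a b, edist (F (u (i+1))) (F (u i))
        ≤ 2 * C := by
      have hbd : ∀ i ∈ Finset.range n \ Finset.Ico a b,
          edist (F (u (i+1))) (F (u i))
            ≤ (if i + 1 = a then C else 0) + (if i = b then C else 0) := by
        intro i hi
        simp only [Finset.mem_sdiff, Finset.mem_range, Finset.mem_Ico, not_and_or, not_le,
          not_lt] at hi
        obtain ⟨hin', hni⟩ := hi
        by_cases hia : i + 1 = a
        · have h1 : u i ∉ J := fun hm => by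
            have := (hout i (by omega) hm).1; omega
          have h2 : u (i+1) ∈ J := by rw [hia]; exact huaJ
          rw [hF, Set.indicator_of_notMem h1, Set.indicator_of_mem h2]
          have : edist (h (u (i+1))) (0:ℝ) = ENNReal.ofReal |h (u (i+1))| := by
            rw [edist_dist, Real.dist_eq, sub_zero]
          rw [this, if_pos hia]
          exact le_add_of_le_of_nonneg (hC _ h2) bot_le
        · by_cases hib : i = b
          · have h1 : u i ∈ J := hib ▸ hubJ
            have h2 : u (i+1) ∉ J := fun hm => by
              have := (hout (i+1) (by omega) hm).2; omega
            rw [hF, Set.indicator_of_mem h1, Set.indicator_of_notMem h2]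
            have : edist (0:ℝ) (h (u i)) = ENNReal.ofReal |h (u i)| := by
              rw [edist_dist, Real.dist_eq, zero_sub, abs_neg]
            rw [this, if_neg hia, if_pos hib, zero_add]
            exact hC _ h1
          · -- both outside
            have hcase : i + 1 < a ∨ b < i := by
              rcases hni with h | h
              · left; omega
              · right; omega
            have h1 : u i ∉ J := fun hm => by
              have := hout i (by omega) hm; omega
            have h2 : u (i+1) ∉ J := fun hm => by
              have := hout (i+1) (by omega) hm; omega
            rw [hF, Set.indicator_of_notMem h1, Set.indicator_of_notMem h2]
            simp
      calc ∑ i ∈ Finset.range n \ Finset.Ico a b, edist (F (u (i+1))) (F (u i))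
          ≤ ∑ i ∈ Finset.range n \ Finset.Ico a b,
              ((if i + 1 = a then C else 0) + (if i = b then C else 0)) :=
            Finset.sum_le_sum hbd
        _ = (∑ i ∈ Finset.range n \ Finset.Ico a b, if i + 1 = a then C else 0)
            + ∑ i ∈ Finset.range n \ Finset.Ico a b, if i = b then C else 0 :=
            Finset.sum_add_distrib
        _ ≤ C + C := add_le_add
            (sum_ite_le _ (fun i j hi hj => by omega) C)
            (sum_ite_le _ (fun i j hi hj => by omega) C)
        _ = 2 * C := (two_mul C).symm
    calc ∑ i ∈ Finset.range n \ Finset.Ico a b, edist (F (u (i+1))) (F (u i))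
          + ∑ i ∈ Finset.Ico a b, edist (F (u (i+1))) (F (u i))
        ≤ 2 * C + eVariationOn h (s ∩ J) := add_le_add houter hinner
      _ = eVariationOn h (s ∩ J) + 2 * C := add_comm _ _

lemma separated {A B : Set ℝ} (hA : A.OrdConnected) (hB : B.OrdConnected)
    (hd : Disjoint A B) {a b : ℝ} (ha : a ∈ A) (hb : b ∈ B) (hab : a ≤ b) :
    ∀ x ∈ A, ∀ y ∈ B, x ≤ y := by
  intro x hx y hy
  by_contra hlt
  push_neg at hlt
  rcases le_or_gt x b with hc | hc
  · exact absurd (hB.out hy hb ⟨hlt.le, hc⟩) fun hxB => hd.ne_of_mem hx hxB rfl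
  · exact absurd (hA.out ha hx ⟨hab, hc.le⟩) fun hbA => hd.ne_of_mem hbA hb rfl

lemma sum_evar_le {ι : Type*} (f : ℝ → ℝ) (Z : ι → Set ℝ)
    (hconn : ∀ i, (Z i).OrdConnected) (hne : ∀ i, (Z i).Nonempty)
    (hdisj : Pairwise (Function.onFun Disjoint Z)) (t : Finset ι) :
    ∑ i ∈ t, eVariationOn f (Z i) ≤ eVariationOn f (⋃ i ∈ t, Z i) := by
  classical
  induction t using Finset.strongInduction with
  | _ t ih =>
    rcases t.eq_empty_or_nonempty with rfl | hne'
    · simp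
    · set x : ι → ℝ := fun i => (hne i).choose with hx
      have hxZ : ∀ i, x i ∈ Z i := fun i => (hne i).choose_spec
      obtain ⟨b, hbt, hmax⟩ := t.exists_max_image x hne'
      have h1 : ∀ u ∈ ⋃ i ∈ t.erase b, Z i, ∀ v ∈ Z b, u ≤ v := by
        intro u hu v hv
        simp only [Set.mem_iUnion] at hu
        obtain ⟨i, hit, hiu⟩ := hu
        have hib : i ≠ b := Finset.ne_of_mem_erase hit
        have hd : Disjoint (Z i) (Z b) := hdisj hib
        have hxle : x i ≤ x b := hmax i (Finset.mem_of_mem_erase hit)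
        exact separated (hconn i) (hconn b) hd (hxZ i) (hxZ b) hxle u hiu v hv
      calc ∑ i ∈ t, eVariationOn f (Z i)
          = ∑ i ∈ t.erase b, eVariationOn f (Z i) + eVariationOn f (Z b) :=
            (Finset.sum_erase_add t _ hbt).symm
        _ ≤ eVariationOn f (⋃ i ∈ t.erase b, Z i) + eVariationOn f (Z b) :=
            add_le_add_left (ih _ (Finset.erase_ssubset hbt)) _
        _ ≤ eVariationOn f ((⋃ i ∈ t.erase b, Z i) ∪ Z b) :=
            eVariationOn.add_le_union f h1
        _ = eVariationOn f (⋃ i ∈ t, Z i) := by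
            congr 1
            rw [union_comm, ← Finset.set_biUnion_insert, Finset.insert_erase hbt]

lemma bv_aemeasurable {f : ℝ → ℝ} (hf : BoundedVariationOn f (Set.Icc 0 1))
    (ν : Measure ℝ) (hsupp : ν (Set.Icc (0:ℝ) 1)ᶜ = 0) :
    AEStronglyMeasurable f ν := by
  obtain ⟨p, q, hp, hq, hpq⟩ :=
    hf.locallyBoundedVariationOn.exists_monotoneOn_sub_monotoneOn
  set c : ℝ → ℝ := fun x => min (max x 0) 1 with hc
  have hcmem : ∀ x, c x ∈ Set.Icc (0:ℝ) 1 :=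
    fun x => ⟨le_min (le_max_right x 0) zero_le_one, min_le_right _ _⟩
  have hcmono : Monotone c := fun x y hxy =>
    min_le_min (max_le_max hxy le_rfl) le_rfl
  have hcid : ∀ x ∈ Set.Icc (0:ℝ) 1, c x = x := by
    intro x hx
    simp [hc, max_eq_left hx.1, min_eq_left hx.2]
  have hp' : Monotone (p ∘ c) := fun x y hxy => hp (hcmem x) (hcmem y) (hcmono hxy)
  have hq' : Monotone (q ∘ c) := fun x y hxy => hq (hcmem x) (hcmem y) (hcmono hxy)
  have hmeas : Measurable (fun x => p (c x) - q (c x)) :=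
    (hp'.measurable.sub hq'.measurable)
  apply hmeas.aestronglyMeasurable.congr
  have hnull : ∀ᵐ x ∂ν, x ∈ Set.Icc (0:ℝ) 1 := by
    rw [MeasureTheory.ae_iff]
    apply measure_mono_null _ hsupp
    intro y hy
    exact hy
  filter_upwards [hnull] with x hx
  rw [hcid x hx, hpq]
  simp

lemma ofReal_abs_le (f : ℝ → ℝ) (Zi : Set ℝ) (hmeas : MeasurableSet Zi)
    (ν : Measure ℝ) (hν0 : ν Zi ≠ 0) (hνt : ν Zi ≠ ∞) :
    ∀ x ∈ Zi, ENNReal.ofReal |f x| ≤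
      eVariationOn f Zi + (∫⁻ y in Zi, ENNReal.ofReal |f y| ∂ν) / ν Zi := by
  intro x hx
  set c : ℝ≥0∞ := ENNReal.ofReal |f x| with hcdef
  set G : ℝ → ℝ≥0∞ := fun y => eVariationOn f Zi + ENNReal.ofReal |f y| with hG
  have h1 : ∀ y ∈ Zi, c ≤ G y := by
    intro y hy
    have habs : |f x| ≤ |f y| + |f x - f y| := by
      calc |f x| = |f y + (f x - f y)| := by ring_nf
        _ ≤ |f y| + |f x - f y| := abs_add_le _ _
    have hedist : ENNReal.ofReal |f x - f y| ≤ eVariationOn f Zi := by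
      rw [← Real.dist_eq, ← edist_dist]
      exact eVariationOn.edist_le f hx hy
    calc c ≤ ENNReal.ofReal (|f y| + |f x - f y|) := ENNReal.ofReal_le_ofReal habs
      _ = ENNReal.ofReal |f y| + ENNReal.ofReal |f x - f y| :=
          ENNReal.ofReal_add (abs_nonneg _) (abs_nonneg _)
      _ ≤ ENNReal.ofReal |f y| + eVariationOn f Zi := add_le_add_right hedist _
      _ = G y := add_comm _ _
  have hkey : c * ν Zi ≤ eVariationOn f Zi * ν Zi + ∫⁻ y in Zi, ENNReal.ofReal |f y| ∂ν := by
    calc c * ν Zi = ∫⁻ _ in Zi, c ∂ν := (setLIntegral_const Zi c).symm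
      _ = ∫⁻ y, Zi.indicator (fun _ => c) y ∂ν := (lintegral_indicator hmeas _).symm
      _ ≤ ∫⁻ y, Zi.indicator G y ∂ν := by
          apply lintegral_mono
          intro y
          by_cases hy : y ∈ Zi
          · rw [Set.indicator_of_mem hy, Set.indicator_of_mem hy]; exact h1 y hy
          · rw [Set.indicator_of_notMem hy, Set.indicator_of_notMem hy]
      _ = ∫⁻ y in Zi, G y ∂ν := lintegral_indicator hmeas _
      _ = eVariationOn f Zi * ν Zi + ∫⁻ y in Zi, ENNReal.ofReal |f y| ∂ν := by
          rw [hG]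
          rw [lintegral_add_left measurable_const]
          rw [setLIntegral_const]
  have := (ENNReal.le_div_iff_mul_le (Or.inl hν0) (Or.inl hνt)).2 hkey
  calc c ≤ (eVariationOn f Zi * ν Zi + ∫⁻ y in Zi, ENNReal.ofReal |f y| ∂ν) / ν Zi := this
    _ = eVariationOn f Zi * ν Zi / ν Zi + (∫⁻ y in Zi, ENNReal.ofReal |f y| ∂ν) / ν Zi :=
        ENNReal.add_div
    _ = eVariationOn f Zi + (∫⁻ y in Zi, ENNReal.ofReal |f y| ∂ν) / ν Zi := by
        rw [mul_div_assoc, ENNReal.div_self hν0 hνt, mul_one]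

end LYaux

open LYaux in
/-- Lasota–Yorke inequality for an open transfer operator: with pairwise disjoint intervals
`Z i ⊆ [0,1]` refining the monotonicity partition (witnessed by monotone inverse branches
`ψ i : J i → Z i`, `J i = S '' Z i`), a weight `g` with `|g| ≤ M` on `[0,1]` and
`var_{Z i}(g) ≤ 2M`, and a fully supported probability measure `ν` on `[0,1]`, the operator
`L f = Σ_i 1_{J i} ((f·g) ∘ ψ i)` satisfies
`var(L f) ≤ 9 M var(f) + (8 M / min_i ν(Z i)) ν(|f|)`. -/
theorem stmt9 {ι : Type*} [Fintype ι] [Nonempty ι]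
    (S : ℝ → ℝ) (g : ℝ → ℝ) (hg : BoundedVariationOn g (Set.Icc 0 1))
    (Z J : ι → Set ℝ) (ψ : ι → ℝ → ℝ)
    (ν : Measure ℝ) [IsProbabilityMeasure ν]
    (hsupp : ν (Set.Icc (0:ℝ) 1)ᶜ = 0)
    (hfull : ∀ a b : ℝ, 0 ≤ a → a < b → b ≤ 1 → 0 < ν (Set.Icc a b))
    (hZsub : ∀ i, Z i ⊆ Set.Icc 0 1) (hZconn : ∀ i, (Z i).OrdConnected)
    (hZne : ∀ i, (Z i).Nonempty) (hZmeas : ∀ i, MeasurableSet (Z i))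
    (hZdisj : Pairwise (Function.onFun Disjoint Z))
    (hJsub : ∀ i, J i ⊆ Set.Icc 0 1) (hJconn : ∀ i, (J i).OrdConnected)
    (hJ : ∀ i, J i = S '' Z i)
    (hψ : ∀ i, Set.BijOn (ψ i) (J i) (Z i))
    (hψmono : ∀ i, StrictMonoOn (ψ i) (J i) ∨ StrictAntiOn (ψ i) (J i))
    (hψinv : ∀ i, ∀ x ∈ Z i, ψ i (S x) = x)
    (M : ℝ) (hM : ∀ x ∈ Set.Icc (0:ℝ) 1, |g x| ≤ M)
    (hvarg : ∀ i, (eVariationOn g (Z i)).toReal ≤ 2 * M)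
    (hνZ : ∀ i, 0 < ν (Z i))
    (f : ℝ → ℝ) (hf : BoundedVariationOn f (Set.Icc 0 1)) :
    (eVariationOn
        (fun x => ∑ i, Set.indicator (J i) (fun y => f (ψ i y) * g (ψ i y)) x)
        (Set.Icc 0 1)).toReal ≤
      9 * M * (eVariationOn f (Set.Icc 0 1)).toReal +
        (8 * M / Finset.univ.inf' Finset.univ_nonempty fun i => (ν (Z i)).toReal) *
          ∫ x, |f x| ∂ν := by
  classical
  have hM0 : 0 ≤ M := (abs_nonneg (g 0)).trans (hM 0 ⟨le_refl 0, zero_le_one⟩)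
  set φ : ℝ → ℝ≥0∞ := fun y => ENNReal.ofReal |f y| with hφ
  set V : ι → ℝ≥0∞ := fun i => eVariationOn f (Z i) with hV
  set I : ι → ℝ≥0∞ := fun i => ∫⁻ y in Z i, φ y ∂ν with hI
  set Itot : ℝ≥0∞ := ∫⁻ y, φ y ∂ν with hItot
  set Vtot : ℝ≥0∞ := eVariationOn f (Set.Icc 0 1) with hVtot
  set c : ℝ := Finset.univ.inf' Finset.univ_nonempty fun i => (ν (Z i)).toReal with hcdef
  set D : ι → ℝ≥0∞ := fun i => I i / ν (Z i) with hD
  have hνfin : ∀ i, ν (Z i) ≠ ∞ := fun i => measure_ne_top ν _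
  have hc0 : 0 < c := by
    rw [hcdef, Finset.lt_inf'_iff]
    exact fun i _ => ENNReal.toReal_pos (hνZ i).ne' (hνfin i)
  have hcZ : ∀ i, ENNReal.ofReal c ≤ ν (Z i) := by
    intro i
    have h1 : c ≤ (ν (Z i)).toReal :=
      Finset.inf'_le _ (Finset.mem_univ i)
    calc ENNReal.ofReal c ≤ ENNReal.ofReal (ν (Z i)).toReal := ENNReal.ofReal_le_ofReal h1
      _ = ν (Z i) := ENNReal.ofReal_toReal (hνfin i)
  have hfA : ∀ i, ∀ x ∈ Z i, φ x ≤ V i + D i :=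
    fun i => ofReal_abs_le f (Z i) (hZmeas i) ν (hνZ i).ne' (hνfin i)
  have hgZ : ∀ i, eVariationOn g (Z i) ≤ ENNReal.ofReal (2*M) := by
    intro i
    have hfin : eVariationOn g (Z i) ≠ ⊤ :=
      ne_top_of_le_ne_top hg (eVariationOn.mono g (hZsub i))
    rw [← ENNReal.ofReal_toReal hfin]
    exact ENNReal.ofReal_le_ofReal (hvarg i)
  have hMg : ∀ i, ∀ x ∈ Z i, ENNReal.ofReal |g x| ≤ ENNReal.ofReal M :=
    fun i x hx => ENNReal.ofReal_le_ofReal (hM x (hZsub i hx))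
  -- per-index bound
  have hperi : ∀ i, eVariationOn
      (Set.indicator (J i) (fun y => f (ψ i y) * g (ψ i y))) (Set.Icc 0 1)
      ≤ ENNReal.ofReal M * (5 * V i + 4 * D i) := by
    intro i
    set A : ℝ≥0∞ := V i + D i with hA
    have hCb : ∀ y ∈ J i, ENNReal.ofReal |f (ψ i y) * g (ψ i y)| ≤ ENNReal.ofReal M * A := by
      intro y hy
      have hψm := (hψ i).mapsTo hy
      rw [abs_mul, ENNReal.ofReal_mul (abs_nonneg _)]
      calc ENNReal.ofReal |f (ψ i y)| * ENNReal.ofReal |g (ψ i y)|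
          ≤ A * ENNReal.ofReal M := mul_le_mul' (hfA i _ hψm) (hMg i _ hψm)
        _ = ENNReal.ofReal M * A := mul_comm _ _
    have step1 := evar_indicator_le (fun y => f (ψ i y) * g (ψ i y)) (J i) (Set.Icc 0 1)
      (hJconn i) (ENNReal.ofReal M * A) hCb
    have hinter : Set.Icc (0:ℝ) 1 ∩ J i = J i := inter_eq_self_of_subset_right (hJsub i)
    have step2 : eVariationOn (fun y => f (ψ i y) * g (ψ i y)) (J i)
        ≤ eVariationOn (fun x => f x * g x) (Z i) := by
      rcases hψmono i with hm | hm
      · exact eVariationOn.comp_le_of_monotoneOn _ (ψ i) hm.monotoneOn (hψ i).mapsTo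
      · exact eVariationOn.comp_le_of_antitoneOn _ (ψ i) hm.antitoneOn (hψ i).mapsTo
    have step3 : eVariationOn (fun x => f x * g x) (Z i)
        ≤ A * ENNReal.ofReal (2*M) + ENNReal.ofReal M * V i := by
      calc eVariationOn (fun x => f x * g x) (Z i)
          ≤ A * eVariationOn g (Z i) + ENNReal.ofReal M * eVariationOn f (Z i) :=
            evar_mul_le f g (Z i) A (ENNReal.ofReal M) (hfA i) (hMg i)
        _ ≤ A * ENNReal.ofReal (2*M) + ENNReal.ofReal M * V i :=
            add_le_add (mul_le_mul' le_rfl (hgZ i)) le_rfl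
    have h2M : ENNReal.ofReal (2*M) = 2 * ENNReal.ofReal M := by
      rw [ENNReal.ofReal_mul (by norm_num : (0:ℝ) ≤ 2)]
      norm_num
    calc eVariationOn (Set.indicator (J i) (fun y => f (ψ i y) * g (ψ i y))) (Set.Icc 0 1)
        ≤ eVariationOn (fun y => f (ψ i y) * g (ψ i y)) (Set.Icc 0 1 ∩ J i)
          + 2 * (ENNReal.ofReal M * A) := step1
      _ = eVariationOn (fun y => f (ψ i y) * g (ψ i y)) (J i)
          + 2 * (ENNReal.ofReal M * A) := by rw [hinter]
      _ ≤ (A * ENNReal.ofReal (2*M) + ENNReal.ofReal M * V i)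
          + 2 * (ENNReal.ofReal M * A) := add_le_add (step2.trans step3) le_rfl
      _ = ENNReal.ofReal M * (5 * V i + 4 * D i) := by rw [h2M, hA]; ring
  -- sums
  have hVsum : ∑ i : ι, V i ≤ Vtot := by
    calc ∑ i : ι, V i ≤ eVariationOn f (⋃ i ∈ Finset.univ, Z i) :=
        sum_evar_le f Z hZconn hZne hZdisj Finset.univ
      _ ≤ Vtot := by
        apply eVariationOn.mono
        intro x hx
        simp only [Finset.mem_univ, Set.iUnion_true, Set.mem_iUnion] at hx
        obtain ⟨i, hi⟩ := hx
        exact hZsub i hi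
  have hIsum : ∑ i : ι, I i ≤ Itot := by
    have heq : ∑ i : ι, I i = ∫⁻ y in ⋃ i, Z i, φ y ∂ν := by
      rw [Measure.restrict_iUnion hZdisj hZmeas, lintegral_sum_measure, tsum_fintype]
    rw [heq, hItot]
    exact lintegral_mono' Measure.restrict_le_self le_rfl
  have hDsum : ∑ i : ι, D i ≤ Itot / ENNReal.ofReal c := by
    calc ∑ i : ι, D i ≤ ∑ i : ι, I i / ENNReal.ofReal c :=
        Finset.sum_le_sum fun i _ => ENNReal.div_le_div_left (hcZ i) (I i)
      _ = (∑ i : ι, I i) / ENNReal.ofReal c := by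
          simp only [div_eq_mul_inv, Finset.sum_mul]
      _ ≤ Itot / ENNReal.ofReal c := ENNReal.div_le_div_right hIsum _
  -- main ENNReal bound
  have big : eVariationOn
        (fun x => ∑ i, Set.indicator (J i) (fun y => f (ψ i y) * g (ψ i y)) x)
        (Set.Icc 0 1)
      ≤ ENNReal.ofReal M * (5 * Vtot + 4 * (Itot / ENNReal.ofReal c)) := by
    calc eVariationOn
          (fun x => ∑ i, Set.indicator (J i) (fun y => f (ψ i y) * g (ψ i y)) x)
          (Set.Icc 0 1)
        ≤ ∑ i : ι, eVariationOn
            (Set.indicator (J i) (fun y => f (ψ i y) * g (ψ i y))) (Set.Icc 0 1) :=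
          evar_sum_le _ Finset.univ _
      _ ≤ ∑ i : ι, ENNReal.ofReal M * (5 * V i + 4 * D i) :=
          Finset.sum_le_sum fun i _ => hperi i
      _ = ENNReal.ofReal M * (5 * ∑ i : ι, V i + 4 * ∑ i : ι, D i) := by
          rw [← Finset.mul_sum, Finset.sum_add_distrib, ← Finset.mul_sum, ← Finset.mul_sum]
      _ ≤ ENNReal.ofReal M * (5 * Vtot + 4 * (Itot / ENNReal.ofReal c)) :=
          mul_le_mul' le_rfl (add_le_add (mul_le_mul' le_rfl hVsum) (mul_le_mul' le_rfl hDsum))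
  -- finiteness
  have hVfin : Vtot ≠ ⊤ := hf
  have hnull : ∀ᵐ y ∂ν, y ∈ Set.Icc (0:ℝ) 1 := by
    rw [MeasureTheory.ae_iff]
    exact measure_mono_null (fun y hy => hy) hsupp
  obtain ⟨i0⟩ := (inferInstance : Nonempty ι)
  obtain ⟨x0, hx0⟩ := hZne i0
  have hx0I : x0 ∈ Set.Icc (0:ℝ) 1 := hZsub i0 hx0
  have hItotfin : Itot ≠ ⊤ := by
    have hb : ∀ᵐ y ∂ν, φ y ≤ ENNReal.ofReal |f x0| + Vtot := by
      filter_upwards [hnull] with y hy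
      have habs : |f y| ≤ |f x0| + |f y - f x0| := by
        calc |f y| = |f x0 + (f y - f x0)| := by ring_nf
          _ ≤ |f x0| + |f y - f x0| := abs_add_le _ _
      calc φ y ≤ ENNReal.ofReal (|f x0| + |f y - f x0|) := ENNReal.ofReal_le_ofReal habs
        _ = ENNReal.ofReal |f x0| + ENNReal.ofReal |f y - f x0| :=
            ENNReal.ofReal_add (abs_nonneg _) (abs_nonneg _)
        _ ≤ ENNReal.ofReal |f x0| + Vtot := by
            apply add_le_add_right
            rw [← Real.dist_eq, ← edist_dist]
            exact eVariationOn.edist_le f hy hx0I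
    have hle : Itot ≤ ENNReal.ofReal |f x0| + Vtot := by
      calc Itot ≤ ∫⁻ _, (ENNReal.ofReal |f x0| + Vtot) ∂ν := lintegral_mono_ae hb
        _ = ENNReal.ofReal |f x0| + Vtot := by
          rw [lintegral_const, measure_univ, mul_one]
    exact ne_top_of_le_ne_top (ENNReal.add_ne_top.2 ⟨ENNReal.ofReal_ne_top, hVfin⟩) hle
  have hc0' : ENNReal.ofReal c ≠ 0 := by
    simp [ENNReal.ofReal_eq_zero, not_le, hc0]
  have hdivfin : Itot / ENNReal.ofReal c ≠ ⊤ := (ENNReal.div_lt_top hItotfin hc0').ne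
  have hXfin : 5 * Vtot + 4 * (Itot / ENNReal.ofReal c) ≠ ⊤ :=
    ENNReal.add_ne_top.2 ⟨ENNReal.mul_ne_top (by simp) hVfin,
      ENNReal.mul_ne_top (by simp) hdivfin⟩
  have hRfin : ENNReal.ofReal M * (5 * Vtot + 4 * (Itot / ENNReal.ofReal c)) ≠ ⊤ :=
    ENNReal.mul_ne_top ENNReal.ofReal_ne_top hXfin
  have final1 := ENNReal.toReal_mono hRfin big
  -- compute the toReal of the bound
  have hcompute : (ENNReal.ofReal M * (5 * Vtot + 4 * (Itot / ENNReal.ofReal c))).toReal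
      = M * (5 * Vtot.toReal + 4 * (Itot.toReal / c)) := by
    rw [ENNReal.toReal_mul, ENNReal.toReal_ofReal hM0]
    congr 1
    rw [ENNReal.toReal_add (ENNReal.mul_ne_top (by simp) hVfin)
      (ENNReal.mul_ne_top (by simp) hdivfin), ENNReal.toReal_mul, ENNReal.toReal_mul,
      ENNReal.toReal_div, ENNReal.toReal_ofReal hc0.le]
    norm_num
  -- relate Itot.toReal to the Bochner integral
  have hfae : AEStronglyMeasurable f ν := bv_aemeasurable hf ν hsupp
  have habs : AEStronglyMeasurable (fun x => |f x|) ν := by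
    simpa [Real.norm_eq_abs] using hfae.norm
  have hint : ∫ x, |f x| ∂ν = Itot.toReal := by
    rw [hItot, hφ]
    exact MeasureTheory.integral_eq_lintegral_of_nonneg_ae
      (Filter.Eventually.of_forall fun x => abs_nonneg (f x)) habs
  rw [hint]
  refine le_trans (final1.trans_eq hcompute) ?_
  have hvr : (0:ℝ) ≤ Vtot.toReal := ENNReal.toReal_nonneg
  have hir : (0:ℝ) ≤ Itot.toReal := ENNReal.toReal_nonneg
  have h1 : M * (5 * Vtot.toReal) ≤ 9 * M * Vtot.toReal := by nlinarith
  have h2 : M * (4 * (Itot.toReal / c)) ≤ 8 * M / c * Itot.toReal := by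
    rw [div_mul_eq_mul_div, mul_div_assoc]
    have : (4:ℝ) * (Itot.toReal / c) ≤ 8 * (Itot.toReal / c) := by
      apply mul_le_mul_of_nonneg_right (by norm_num) (div_nonneg hir hc0.le)
    nlinarith [mul_le_mul_of_nonneg_left this hM0]
  nlinarith [h1, h2]
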